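/- Let M > 0 and let g(x) = 1/log(1 + M/x) for x > 0. Then for any finite collection of positive reals x_1, …, x_K, (1/K) ∑_{k=1}^K g(x_k) ≤ g((1/K) ∑_{k=1}^K x_k). -/

import Mathlib

lemma key_log_ineq : ∀ u : ℝ, 0 < u → 2 * u / (2 + u) ≤ Real.log (1 + u) := by
  have hmono : MonotoneOn (fun u : ℝ => Real.log (1 + u) - 2 * u / (2 + u)) (Set.Ici 0) := by
    apply monotoneOn_of_deriv_nonneg (convex_Ici 0)
    · apply ContinuousOn.sub
      · apply Real.continuousOn_log.comp (by fun_prop)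
        intro u hu
        simp only [Set.mem_Ici] at hu
        simp only [Set.mem_compl_iff, Set.mem_singleton_iff]
        positivity
      · apply ContinuousOn.div (by fun_prop) (by fun_prop)
        intro u hu; simp only [Set.mem_Ici] at hu; positivity
    · intro u hu
      rw [interior_Ici] at hu
      simp only [Set.mem_Ioi] at hu
      have h1 : (0:ℝ) < 1 + u := by linarith
      have h2 : (0:ℝ) < 2 + u := by linarith
      have hd : HasDerivAt (fun u : ℝ => Real.log (1 + u) - 2 * u / (2 + u))
          (1 / (1 + u) - (2 * (2 + u) - 2 * u * 1) / (2 + u) ^ 2) u := by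
        apply HasDerivAt.sub
        · have := ((hasDerivAt_id u).const_add 1).log h1.ne'
          simpa [one_div] using this
        · simpa using (((hasDerivAt_id u).const_mul 2).fun_div ((hasDerivAt_id u).const_add 2) h2.ne')
      exact hd.differentiableAt.differentiableWithinAt
    · intro u hu
      rw [interior_Ici] at hu
      simp only [Set.mem_Ioi] at hu
      have h1 : (0:ℝ) < 1 + u := by linarith
      have h2 : (0:ℝ) < 2 + u := by linarith
      have hd : HasDerivAt (fun u : ℝ => Real.log (1 + u) - 2 * u / (2 + u))
          (1 / (1 + u) - (2 * (2 + u) - 2 * u * 1) / (2 + u) ^ 2) u := by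
        apply HasDerivAt.sub
        · have := ((hasDerivAt_id u).const_add 1).log h1.ne'
          simpa [one_div] using this
        · simpa using (((hasDerivAt_id u).const_mul 2).fun_div ((hasDerivAt_id u).const_add 2) h2.ne')
      rw [hd.deriv]
      rw [sub_nonneg, div_le_div_iff₀ (by positivity) h1]
      nlinarith [sq_nonneg u]
  intro u hu
  have := hmono (Set.self_mem_Ici) (Set.mem_Ici.mpr hu.le) hu.le
  simp only [add_zero, Real.log_one, mul_zero, zero_div, sub_zero, zero_sub] at this
  linarith [this]



lemma g_concave (M : ℝ) (hM : 0 < M) :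
    ConcaveOn ℝ (Set.Ioi 0) (fun x : ℝ => (Real.log (1 + M / x))⁻¹) := by
  set L : ℝ → ℝ := fun x => Real.log (1 + M / x) with hLdef
  have hLpos : ∀ x : ℝ, 0 < x → 0 < L x := by
    intro x hx
    have : (1:ℝ) < 1 + M / x := by
      have : 0 < M / x := by positivity
      linarith
    exact Real.log_pos this
  have hL : ∀ x : ℝ, 0 < x → HasDerivAt L (-(M / (x * (x + M)))) x := by
    intro x hx
    have hxM : (0:ℝ) < x + M := by linarith
    have h1 : (0:ℝ) < 1 + M / x := by positivity
    have hbase : HasDerivAt (fun x : ℝ => 1 + M / x) (M * -(x ^ 2)⁻¹) x := by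
      simpa [div_eq_mul_inv] using ((hasDerivAt_inv hx.ne').const_mul M).const_add 1
    have := hbase.log h1.ne'
    convert this using 1
    field_simp
  have hA : ∀ x : ℝ, 0 < x → HasDerivAt (fun x : ℝ => M / (x * (x + M)))
      (M * -((2 * x + M) / (x * (x + M)) ^ 2)) x := by
    intro x hx
    have hxM : (0:ℝ) < x + M := by linarith
    have hden : HasDerivAt (fun x : ℝ => x * (x + M)) (2 * x + M) x := by
      have := (hasDerivAt_id x).fun_mul ((hasDerivAt_id x).add_const M)
      refine this.congr_deriv ?_ <;> simp <;> ring
    have h := (hden.fun_inv (by positivity)).const_mul M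
    have heq : (fun x : ℝ => M / (x * (x + M))) = fun x : ℝ => M * (x * (x + M))⁻¹ := by
      funext y; rw [div_eq_mul_inv]
    rw [heq]
    refine h.congr_deriv ?_
    ring
  have hf' : ∀ x : ℝ, 0 < x →
      HasDerivAt (fun x : ℝ => (L x)⁻¹) (M / (x * (x + M)) / (L x) ^ 2) x := by
    intro x hx
    have := (hL x hx).fun_inv (hLpos x hx).ne'
    refine this.congr_deriv ?_
    field_simp
  have hf'' : ∀ x : ℝ, 0 < x →
      HasDerivAt (fun x : ℝ => M / (x * (x + M)) / (L x) ^ 2)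
        ((2 * M ^ 2 - M * (2 * x + M) * L x) / ((x * (x + M)) ^ 2 * (L x) ^ 3)) x := by
    intro x hx
    have hxM : (0:ℝ) < x + M := by linarith
    have hLx := hLpos x hx
    have hsq : HasDerivAt (fun x : ℝ => (L x) ^ 2) (2 * L x ^ 1 * -(M / (x * (x + M)))) x := by
      simpa using (hL x hx).fun_pow 2
    have := (hA x hx).fun_mul (hsq.fun_inv (by positivity))
    have heq : (fun x : ℝ => M / (x * (x + M)) / (L x) ^ 2)
        = fun x : ℝ => M / (x * (x + M)) * ((L x) ^ 2)⁻¹ := by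
      funext y; rw [div_eq_mul_inv]
    rw [heq]
    refine this.congr_deriv ?_
    field_simp
    ring
  have hf''le : ∀ x : ℝ, 0 < x →
      (2 * M ^ 2 - M * (2 * x + M) * L x) / ((x * (x + M)) ^ 2 * (L x) ^ 3) ≤ 0 := by
    intro x hx
    have hxM : (0:ℝ) < x + M := by linarith
    have hLx := hLpos x hx
    apply div_nonpos_of_nonpos_of_nonneg _ (by positivity)
    have hkey := key_log_ineq (M / x) (by positivity)
    have h1 : 2 * (M / x) / (2 + M / x) = 2 * M / (2 * x + M) := by
      rw [div_eq_div_iff (by positivity) (by positivity)]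
      field_simp
    rw [h1] at hkey
    rw [div_le_iff₀ (by positivity)] at hkey
    nlinarith [hkey, hM.le, hx.le]
  have hint : interior (Set.Ioi (0:ℝ)) = Set.Ioi 0 := interior_Ioi
  apply concaveOn_of_hasDerivWithinAt2_nonpos (convex_Ioi 0)
    (f' := fun x => M / (x * (x + M)) / (L x) ^ 2)
    (f'' := fun x => (2 * M ^ 2 - M * (2 * x + M) * L x) / ((x * (x + M)) ^ 2 * (L x) ^ 3))
  · intro x hx
    exact ((hf' x hx).differentiableAt.continuousAt).continuousWithinAt
  · rw [hint]; intro x hx; exact (hf' x hx).hasDerivWithinAt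
  · rw [hint]; intro x hx; exact (hf'' x hx).hasDerivWithinAt
  · rw [hint]; intro x hx; exact hf''le x hx


theorem g_jensen (M : ℝ) (hM : 0 < M) (K : ℕ) (hK : 0 < K)
    (x : Fin K → ℝ) (hx : ∀ k, 0 < x k) :
    (1 / (K : ℝ)) * ∑ k, 1 / Real.log (1 + M / x k) ≤
      1 / Real.log (1 + M / ((1 / (K : ℝ)) * ∑ k, x k)) := by
  have hKpos : (0:ℝ) < K := Nat.cast_pos.mpr hK
  have hconc := g_concave M hM
  have h := hconc.le_map_sum (t := Finset.univ) (w := fun _ : Fin K => 1 / (K:ℝ))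
    (p := x) (fun i _ => by positivity)
    (by simp [Finset.sum_const, Finset.card_univ]; field_simp)
    (fun i _ => hx i)
  simp only [smul_eq_mul] at h
  rw [← Finset.mul_sum, ← Finset.mul_sum] at h
  simpa [one_div] using h
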